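/- Let P(λ) = λ(J₁+R₁) + (J₂+R₂) be an n×n complex posH pencil, let k ≥ 0, and suppose the vectors x₁, …, x_{k+1} ∈ ℂⁿ form a singular chain of P(λ) associated with a right minimal index k, i.e., (J₁+R₁)x₁ = 0, (J₁+R₁)x_{i+1} = (J₂+R₂)x_i for i = 1, …, k, and (J₂+R₂)x_{k+1} = 0. Then R₁x_j = 0 and R₂x_j = 0 for all j = 1, …, k+1, and consequently J₁x₁ = 0, J₁x_{i+1} = J₂x_i for i = 1, …, k, and J₂x_{k+1} = 0, i.e., (x₁, …, x_{k+1}) is also a singular chain of the skew-Hermitian pencil λJ₁ + J₂. -/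

import Mathlib

open Matrix Polynomial
open scoped ComplexOrder

lemma skew_re_aux {n : ℕ} (J : Matrix (Fin n) (Fin n) ℂ) (hJ : Jᴴ = -J)
    (y : Fin n → ℂ) : (star y ⬝ᵥ J *ᵥ y).re = 0 := by
  have h1 : star (star y ⬝ᵥ J *ᵥ y) = star y ⬝ᵥ Jᴴ *ᵥ y := by
    rw [star_dotProduct, star_star, star_mulVec, dotProduct_mulVec]
  rw [hJ] at h1
  have h2 := congrArg Complex.re h1
  simp only [neg_mulVec, dotProduct_neg, Complex.neg_re, Complex.star_def,
    Complex.conj_re] at h2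
  linarith

/-- A polynomial-type sum vanishing for all positive real arguments has all
coefficients zero. -/
lemma coeffs_zero_aux (k : ℕ) (a : ℕ → ℂ)
    (h : ∀ t : ℝ, 0 < t → ∑ i ∈ Finset.range (k+1), a i * (t:ℂ)^(k-i) = 0) :
    ∀ j, j ≤ k → a j = 0 := by
  intro j hj
  set p : Polynomial ℂ := ∑ i ∈ Finset.range (k+1), C (a i) * X^(k-i) with hp
  have hroots : {z : ℂ | p.IsRoot z}.Infinite := by
    apply Set.Infinite.mono (s := (fun t : ℝ => (t:ℂ)) '' Set.Ioi 0)
    · rintro z ⟨t, ht, rfl⟩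
      simp only [IsRoot, hp, eval_finset_sum, eval_mul, eval_C, eval_pow, eval_X]
      exact h t ht
    · exact Set.Infinite.image (Set.injOn_of_injective Complex.ofReal_injective)
        (Set.Ioi_infinite 0)
  have hp0 : p = 0 := p.eq_zero_of_infinite_isRoot hroots
  have hc := congrArg (fun q => Polynomial.coeff q (k - j)) hp0
  simp only [hp, finset_sum_coeff, coeff_C_mul, coeff_X_pow, coeff_zero] at hc
  rw [Finset.sum_eq_single j] at hc
  · simpa using hc
  · intro i hi hij
    simp only [Finset.mem_range] at hi
    have : ¬ (k - j = k - i) := by omega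
    simp [this]
  · intro hj'
    simp at hj'
    omega

/-- Theorem 3.5: if `(x 1, …, x (k+1))` is a singular chain of the posH pencil
`P(λ) = λ(J₁+R₁) + (J₂+R₂)` associated with a right minimal index `k`, then all
chain vectors lie in `ker R₁ ∩ ker R₂` and the chain is also a singular chain of
the skew-Hermitian pencil `λJ₁ + J₂`. -/
theorem posH_singular_chain {n : ℕ}
    (J₁ J₂ R₁ R₂ : Matrix (Fin n) (Fin n) ℂ)
    (hJ₁ : J₁ᴴ = -J₁) (hJ₂ : J₂ᴴ = -J₂)
    (hR₁ : R₁.PosSemidef) (hR₂ : R₂.PosSemidef)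
    (k : ℕ) (x : ℕ → (Fin n → ℂ))
    (hfirst : (J₁ + R₁) *ᵥ x 1 = 0)
    (hchain : ∀ i, 1 ≤ i → i ≤ k → (J₁ + R₁) *ᵥ x (i + 1) = (J₂ + R₂) *ᵥ x i)
    (hlast : (J₂ + R₂) *ᵥ x (k + 1) = 0) :
    (∀ j, 1 ≤ j → j ≤ k + 1 → R₁ *ᵥ x j = 0 ∧ R₂ *ᵥ x j = 0) ∧
    J₁ *ᵥ x 1 = 0 ∧
    (∀ i, 1 ≤ i → i ≤ k → J₁ *ᵥ x (i + 1) = J₂ *ᵥ x i) ∧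
    J₂ *ᵥ x (k + 1) = 0 := by
  set A := J₁ + R₁ with hA
  set B := J₂ + R₂ with hB
  -- the chain vector polynomial
  set v : ℂ → (Fin n → ℂ) :=
    fun z => ∑ i ∈ Finset.range (k+1), ((-1:ℂ)^(i+1) * z^(k-i)) • x (i+1) with hv
  -- key identity : (z A + B) v(z) = 0
  have hkey : ∀ z : ℂ, z • (A *ᵥ v z) + B *ᵥ v z = 0 := by
    intro z
    have hAv : A *ᵥ v z = ∑ i ∈ Finset.range (k+1),
        ((-1:ℂ)^(i+1) * z^(k-i)) • (A *ᵥ x (i+1)) := by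
      simp [hv, Matrix.mulVec_sum, Matrix.mulVec_smul]
    have hBv : B *ᵥ v z = ∑ i ∈ Finset.range (k+1),
        ((-1:ℂ)^(i+1) * z^(k-i)) • (B *ᵥ x (i+1)) := by
      simp [hv, Matrix.mulVec_sum, Matrix.mulVec_smul]
    rw [hAv, hBv, Finset.smul_sum]
    rw [Finset.sum_range_succ' (fun i => z • (((-1:ℂ)^(i+1) * z^(k-i)) • (A *ᵥ x (i+1))))]
    rw [Finset.sum_range_succ (fun i => ((-1:ℂ)^(i+1) * z^(k-i)) • (B *ᵥ x (i+1)))]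
    simp only [hfirst, smul_zero, add_zero, hlast]
    have : ∀ i ∈ Finset.range k,
        z • (((-1:ℂ)^(i+1+1) * z^(k-(i+1))) • (A *ᵥ x (i+1+1)))
          = - (((-1:ℂ)^(i+1) * z^(k-i)) • (B *ᵥ x (i+1))) := by
      intro i hi
      simp only [Finset.mem_range] at hi
      rw [hchain (i+1) (by omega) (by omega)]
      rw [smul_smul, ← neg_smul]
      congr 1
      have hz : z * z^(k-(i+1)) = z^(k-i) := by
        rw [← pow_succ']
        congr 1
        omega
      calc z * ((-1:ℂ)^(i+1+1) * z^(k-(i+1)))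
          = -((-1:ℂ)^(i+1) * (z * z^(k-(i+1)))) := by ring
        _ = -((-1:ℂ)^(i+1) * z^(k-i)) := by rw [hz]
    rw [Finset.sum_congr rfl this]
    simp
  -- for positive real t, R₁ v(t) = 0 and R₂ v(t) = 0
  have hRv : ∀ t : ℝ, 0 < t → R₁ *ᵥ v t = 0 ∧ R₂ *ᵥ v t = 0 := by
    intro t ht
    set w := v (t:ℂ) with hw
    have h0 : (t:ℂ) * (star w ⬝ᵥ A *ᵥ w) + star w ⬝ᵥ B *ᵥ w = 0 := by
      have := congrArg (fun u => star w ⬝ᵥ u) (hkey (t:ℂ))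
      simpa [dotProduct_add, dotProduct_smul, smul_eq_mul] using this
    have hA1 : star w ⬝ᵥ A *ᵥ w = star w ⬝ᵥ J₁ *ᵥ w + star w ⬝ᵥ R₁ *ᵥ w := by
      rw [hA, add_mulVec, dotProduct_add]
    have hB1 : star w ⬝ᵥ B *ᵥ w = star w ⬝ᵥ J₂ *ᵥ w + star w ⬝ᵥ R₂ *ᵥ w := by
      rw [hB, add_mulVec, dotProduct_add]
    have hr1 := hR₁.dotProduct_mulVec_nonneg w
    have hr2 := hR₂.dotProduct_mulVec_nonneg w
    rw [Complex.le_def] at hr1 hr2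
    simp only [Complex.zero_re, Complex.zero_im] at hr1 hr2
    have hre := congrArg Complex.re h0
    rw [hA1, hB1] at hre
    have hj1 := skew_re_aux J₁ hJ₁ w
    have hj2 := skew_re_aux J₂ hJ₂ w
    simp only [Complex.add_re, Complex.zero_re, Complex.mul_re, Complex.ofReal_re,
      Complex.ofReal_im, Complex.add_im, zero_mul, sub_zero] at hre
    rw [hj1, hj2] at hre
    have e1 : (star w ⬝ᵥ R₁ *ᵥ w).re = 0 := by nlinarith [hr1.1, hr2.1, hr1.2, hr2.2]
    have e2 : (star w ⬝ᵥ R₂ *ᵥ w).re = 0 := by nlinarith [hr1.1, hr2.1, hr1.2, hr2.2]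
    constructor
    · rw [← hR₁.dotProduct_mulVec_zero_iff w]
      exact Complex.ext (by simpa using e1) (by simpa using hr1.2.symm)
    · rw [← hR₂.dotProduct_mulVec_zero_iff w]
      exact Complex.ext (by simpa using e2) (by simpa using hr2.2.symm)
  -- coefficient extraction
  have hker : ∀ j, 1 ≤ j → j ≤ k + 1 → R₁ *ᵥ x j = 0 ∧ R₂ *ᵥ x j = 0 := by
    have main : ∀ (R : Matrix (Fin n) (Fin n) ℂ),
        (∀ t : ℝ, 0 < t → R *ᵥ v t = 0) →
        ∀ j, 1 ≤ j → j ≤ k + 1 → R *ᵥ x j = 0 := by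
      intro R hRz j hj1 hj2
      funext m
      have hc := coeffs_zero_aux k (fun i => (-1:ℂ)^(i+1) * (R *ᵥ x (i+1)) m)
        (fun t ht => by
          have hsum : R *ᵥ v (t:ℂ) = ∑ i ∈ Finset.range (k+1),
              ((-1:ℂ)^(i+1) * (t:ℂ)^(k-i)) • (R *ᵥ x (i+1)) := by
            simp [hv, Matrix.mulVec_sum, Matrix.mulVec_smul]
          have h2 := congrArg (fun u => u m) ((hsum.symm).trans (hRz t ht))
          simp only [Finset.sum_apply, Pi.smul_apply, smul_eq_mul, Pi.zero_apply] at h2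
          rw [← h2]
          exact Finset.sum_congr rfl fun i _ => by ring)
        (j-1) (by omega)
      have hj : j - 1 + 1 = j := by omega
      have hc' : (-1:ℂ)^(j-1+1) * (R *ᵥ x (j-1+1)) m = 0 := hc
      rw [hj] at hc'
      show (R *ᵥ x j) m = (0 : Fin n → ℂ) m
      rcases mul_eq_zero.mp hc' with h | h
      · exact absurd h (by positivity)
      · simpa using h
    exact fun j hj1 hj2 =>
      ⟨main R₁ (fun t ht => (hRv t ht).1) j hj1 hj2,
       main R₂ (fun t ht => (hRv t ht).2) j hj1 hj2⟩
  refine ⟨hker, ?_, ?_, ?_⟩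
  · have h1 := (hker 1 le_rfl (by omega)).1
    rw [hA, add_mulVec, h1, add_zero] at hfirst
    exact hfirst
  · intro i hi1 hi2
    have h1 := (hker (i+1) (by omega) (by omega)).1
    have h2 := (hker i hi1 (by omega)).2
    have := hchain i hi1 hi2
    rw [hA, hB, add_mulVec, add_mulVec, h1, h2, add_zero, add_zero] at this
    exact this
  · have h2 := (hker (k+1) (by omega) le_rfl).2
    rw [hB, add_mulVec, h2, add_zero] at hlast
    exact hlast
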